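/- Let S be a subset of ℂ × ℕ of the form {n_i + m_j·i : i ∈ ℤ_{>0}, j = 1,…,ℓ} × {0,…,N}, where (n_i) is a strictly increasing sequence of real numbers tending to infinity, m_1,…,m_ℓ are distinct real numbers, and N ∈ ℕ. If the series ∑_{(α,β)∈S} a_{α,β} e^{α·L(z)} (L(z))^β (with L(z) a fixed branch of the logarithm) converges absolutely and to 0 for all z in some nonempty open subset of ℂ \ {0}, then a_{α,β} = 0 for all (α,β) ∈ S. -/

import Mathlib

open Complex

open Filter Topology


namespace Stmt1Aux


variable {ℓ N : ℕ}

noncomputable def trm (n : ℕ → ℝ) (m : Fin ℓ → ℝ) (a : ℕ → Fin ℓ → Fin (N + 1) → ℂ)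
    (w : ℂ) (p : ℕ × Fin ℓ × Fin (N + 1)) : ℂ :=
  a p.1 p.2.1 p.2.2 * Complex.exp ((↑(n p.1) + ↑(m p.2.1) * Complex.I) * w) * w ^ (p.2.2 : ℕ)

lemma norm_trm (n : ℕ → ℝ) (m : Fin ℓ → ℝ) (a : ℕ → Fin ℓ → Fin (N + 1) → ℂ)
    (w : ℂ) (p : ℕ × Fin ℓ × Fin (N + 1)) :
    ‖trm n m a w p‖ = ‖a p.1 p.2.1 p.2.2‖ *
      Real.exp (n p.1 * w.re - m p.2.1 * w.im) * ‖w‖ ^ (p.2.2 : ℕ) := by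
  simp only [trm, norm_mul, norm_pow, Complex.norm_exp]
  congr 3
  simp [Complex.add_re, Complex.mul_re, Complex.add_im, Complex.mul_im]

lemma exists_slope (n : ℕ → ℝ) (hninj : Function.Injective n)
    (m : Fin ℓ → ℝ) (hm : Function.Injective m) :
    ∃ c : ℝ, ∀ i i' : ℕ, ∀ j j' : Fin ℓ,
      n i - c * m j = n i' - c * m j' → i = i' ∧ j = j' := by
  set B : Set ℝ := ⋃ q : (ℕ × ℕ) × Fin ℓ × Fin ℓ,
    {x : ℝ | x * (m q.2.1 - m q.2.2) = n q.1.1 - n q.1.2 ∧ q.2.1 ≠ q.2.2} with hB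
  have hBc : B.Countable := by
    apply Set.countable_iUnion
    intro q
    rcases eq_or_ne q.2.1 q.2.2 with h | h
    · simp [h]
    · have hd : m q.2.1 - m q.2.2 ≠ 0 := sub_ne_zero.2 fun hh => h (hm (by linarith))
      apply Set.Countable.mono _ (Set.countable_singleton ((n q.1.1 - n q.1.2) / (m q.2.1 - m q.2.2)))
      intro x hx
      rcases hx with ⟨hx1, _⟩
      simp only [Set.mem_singleton_iff]
      field_simp
      linarith [hx1]
  have : B ≠ Set.univ := fun h => Cardinal.not_countable_real (h ▸ hBc)
  obtain ⟨c, hc⟩ : ∃ c : ℝ, c ∉ B := by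
    by_contra h
    push_neg at h
    exact this (Set.eq_univ_of_forall h)
  refine ⟨c, fun i i' j j' h => ?_⟩
  rcases eq_or_ne j j' with rfl | hj
  · exact ⟨hninj (by linarith), rfl⟩
  · exfalso
    apply hc
    rw [hB]
    refine Set.mem_iUnion.2 ⟨((i, i'), (j, j')), ?_, hj⟩
    simp only [Set.mem_setOf_eq]
    linarith

lemma trm_norm_le {n : ℕ → ℝ} (hmono : Monotone n) {m : Fin ℓ → ℝ} {Mm : ℝ}
    (hMm : ∀ j, |m j| ≤ Mm) (a : ℕ → Fin ℓ → Fin (N + 1) → ℂ) {w₁ w : ℂ} (hw₁ : w₁ ≠ 0)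
    (hw : w.re ≤ w₁.re) (p : ℕ × Fin ℓ × Fin (N + 1)) :
    ‖trm n m a w p‖ ≤ ‖trm n m a w₁ p‖ *
      (Real.exp (n 0 * (w.re - w₁.re) + Mm * (|w.im| + |w₁.im|)) *
        max 1 (‖w‖ / ‖w₁‖) ^ N) := by
  obtain ⟨i, j, β⟩ := p
  rw [norm_trm, norm_trm]
  have hA₁ : 0 < ‖w₁‖ := by
    simpa [norm_pos_iff] using hw₁
  have hexp : Real.exp (n i * w.re - m j * w.im) ≤
      Real.exp (n i * w₁.re - m j * w₁.im) *
        Real.exp (n 0 * (w.re - w₁.re) + Mm * (|w.im| + |w₁.im|)) := by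
    rw [← Real.exp_add, Real.exp_le_exp]
    have h1 : n i * (w.re - w₁.re) ≤ n 0 * (w.re - w₁.re) :=
      mul_le_mul_of_nonpos_right (hmono (Nat.zero_le i)) (by linarith)
    have h2 : - (m j * w.im) + m j * w₁.im ≤ Mm * (|w.im| + |w₁.im|) := by
      have := hMm j
      have h3 : - (m j * w.im) ≤ Mm * |w.im| := by
        calc - (m j * w.im) ≤ |m j * w.im| := neg_le_abs _
        _ = |m j| * |w.im| := abs_mul _ _
        _ ≤ Mm * |w.im| := by gcongr
      have h4 : m j * w₁.im ≤ Mm * |w₁.im| := by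
        calc m j * w₁.im ≤ |m j * w₁.im| := le_abs_self _
        _ = |m j| * |w₁.im| := abs_mul _ _
        _ ≤ Mm * |w₁.im| := by gcongr
      linarith
    nlinarith [h1, h2]
  have hpow : ‖w‖ ^ (β : ℕ) ≤
      ‖w₁‖ ^ (β : ℕ) * max 1 (‖w‖ / ‖w₁‖) ^ N := by
    have h5 : ‖w‖ ^ (β : ℕ) =
        ‖w₁‖ ^ (β : ℕ) * (‖w‖ / ‖w₁‖) ^ (β : ℕ) := by
      rw [div_pow, mul_div_assoc', mul_div_right_comm, div_self (pow_ne_zero _ hA₁.ne'), one_mul]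
    rw [h5]
    apply mul_le_mul_of_nonneg_left _ (by positivity)
    calc (‖w‖ / ‖w₁‖) ^ (β : ℕ)
          ≤ max 1 (‖w‖ / ‖w₁‖) ^ (β : ℕ) := by
            apply pow_le_pow_left₀ (by positivity) (le_max_right _ _)
        _ ≤ max 1 (‖w‖ / ‖w₁‖) ^ N := by
            apply pow_le_pow_right₀ (le_max_left _ _) β.is_le
  calc ‖a i j β‖ * Real.exp (n i * w.re - m j * w.im) * ‖w‖ ^ (β : ℕ)
      ≤ ‖a i j β‖ * (Real.exp (n i * w₁.re - m j * w₁.im) *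
          Real.exp (n 0 * (w.re - w₁.re) + Mm * (|w.im| + |w₁.im|))) *
          (‖w₁‖ ^ (β : ℕ) * max 1 (‖w‖ / ‖w₁‖) ^ N) := by
        apply mul_le_mul _ hpow (by positivity) (by positivity)
        exact mul_le_mul_of_nonneg_left hexp (norm_nonneg _)
    _ = ‖a i j β‖ * Real.exp (n i * w₁.re - m j * w₁.im) * ‖w₁‖ ^ (β : ℕ) *
          (Real.exp (n 0 * (w.re - w₁.re) + Mm * (|w.im| + |w₁.im|)) *
            max 1 (‖w‖ / ‖w₁‖) ^ N) := by ring



lemma helperExp (C : ℝ) {γ : ℝ} (hγ : 0 < γ) (k : ℕ) (ρ : ℝ) :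
    Tendsto (fun s : ℝ => C * Real.exp (γ * s) * (-s * ρ) ^ k) atBot (𝓝 0) := by
  have h1 : Tendsto (fun t : ℝ => γ * t) atTop atTop :=
    tendsto_id.const_mul_atTop hγ
  have h2 : Tendsto (fun t : ℝ => (γ * t) ^ k * Real.exp (-(γ * t))) atTop (𝓝 0) :=
    (Real.tendsto_pow_mul_exp_neg_atTop_nhds_zero k).comp h1
  have h3 : Tendsto (fun t : ℝ => (C * ρ ^ k / γ ^ k) * ((γ * t) ^ k * Real.exp (-(γ * t))))
      atTop (𝓝 0) := by simpa using h2.const_mul (C * ρ ^ k / γ ^ k)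
  have h4 := h3.comp tendsto_neg_atBot_atTop
  apply h4.congr
  intro s
  simp only [Function.comp]
  rw [show -(γ * -s) = γ * s by ring, mul_pow]
  have hγk : γ ^ k ≠ 0 := pow_ne_zero _ hγ.ne'
  field_simp
  ring

lemma helperPow (C : ℝ) {k : ℕ} (hk : 0 < k) {ρ : ℝ} (hρ : 0 < ρ) :
    Tendsto (fun s : ℝ => C / (-s * ρ) ^ k) atBot (𝓝 0) := by
  have h1 : Tendsto (fun s : ℝ => -s * ρ) atBot atTop :=
    tendsto_neg_atBot_atTop.atTop_mul_const hρ
  have h2 : Tendsto (fun s : ℝ => (-s * ρ) ^ k) atBot atTop :=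
    (tendsto_pow_atTop hk.ne').comp h1
  simpa [div_eq_mul_inv] using h2.inv_tendsto_atTop.const_mul C

lemma sub1 {A E x : ℝ} (hE : 0 < E) (hx : 1 ≤ x) {b b₀ : ℕ} (hb : b ≤ b₀) (hA : 0 ≤ A) :
    A * E * x ^ b / (E * x ^ b₀) ≤ A / x ^ (b₀ - b) := by
  have hx0 : (0:ℝ) < x := lt_of_lt_of_le one_pos hx
  have hxx : x ^ b * x ^ (b₀ - b) = x ^ b₀ := by rw [← pow_add]; congr 1; omega
  rw [div_le_div_iff₀ (by positivity) (by positivity)]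
  calc A * E * x ^ b * x ^ (b₀ - b) = A * (E * (x ^ b * x ^ (b₀ - b))) := by ring
    _ = A * (E * x ^ b₀) := by rw [hxx]
    _ ≤ A * (E * x ^ b₀) := le_refl _

lemma sub2 {A x : ℝ} (ν₁ ν₀ s : ℝ) {b b₀ NN : ℕ} (hA : 0 ≤ A) (hx : 1 ≤ x) (hb : b ≤ NN) :
    A * Real.exp (ν₁ * s) * x ^ b / (Real.exp (ν₀ * s) * x ^ b₀) ≤
      A * Real.exp ((ν₁ - ν₀) * s) * x ^ NN := by
  have hx0 : (0:ℝ) < x := lt_of_lt_of_le one_pos hx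
  rw [div_le_iff₀ (by positivity)]
  have hexp : Real.exp ((ν₁ - ν₀) * s) * Real.exp (ν₀ * s) = Real.exp (ν₁ * s) := by
    rw [← Real.exp_add]; congr 1; ring
  have hpow : x ^ b ≤ x ^ NN * x ^ b₀ := by
    rw [← pow_add]
    exact pow_le_pow_right₀ hx (by omega)
  calc A * Real.exp (ν₁ * s) * x ^ b
      ≤ A * Real.exp (ν₁ * s) * (x ^ NN * x ^ b₀) := by gcongr
    _ = A * Real.exp ((ν₁ - ν₀) * s) * x ^ NN * (Real.exp (ν₀ * s) * x ^ b₀) := by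
        rw [← hexp]; ring


end Stmt1Aux

-- appended to base
namespace Stmt1Aux

variable {ℓ N : ℕ}

lemma coeffs_eq_zero {n : ℕ → ℝ} (hn : StrictMono n)
    (hn' : Tendsto n atTop atTop)
    {m : Fin ℓ → ℝ} (hm : Function.Injective m)
    (a : ℕ → Fin ℓ → Fin (N + 1) → ℂ) {σ : ℝ}
    (hs : ∀ w : ℂ, w.re < σ → Summable fun p : ℕ × Fin ℓ × Fin (N + 1) => ‖trm n m a w p‖)
    (h0 : ∀ w : ℂ, w.re < σ → ∑' p : ℕ × Fin ℓ × Fin (N + 1), trm n m a w p = 0)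
    (i : ℕ) (j : Fin ℓ) (β : Fin (N + 1)) : a i j β = 0 := by
  classical
  by_contra hne
  obtain ⟨c, hc⟩ := exists_slope n hn.injective m hm
  set ν : ℕ × Fin ℓ × Fin (N + 1) → ℝ := fun p => n p.1 - c * m p.2.1 with hνdef
  have : Nonempty (Fin ℓ) := ⟨j⟩
  obtain ⟨Cm, hCm⟩ : ∃ Cm : ℝ, ∀ j' : Fin ℓ, |c * m j'| ≤ Cm :=
    ⟨Finset.univ.sup' Finset.univ_nonempty fun j' => |c * m j'|,
      fun j' => Finset.le_sup' (fun j'' => |c * m j''|) (Finset.mem_univ j')⟩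
  -- sublevel sets of ν are finite
  have hfin : ∀ r : ℝ, {p : ℕ × Fin ℓ × Fin (N + 1) | ν p ≤ r}.Finite := by
    intro r
    obtain ⟨I, hI⟩ := Filter.eventually_atTop.1 (hn'.eventually_gt_atTop (r + Cm))
    apply Set.Finite.subset ((Set.finite_Iio I).prod (Set.finite_univ))
    rintro ⟨i', j', β'⟩ hp
    simp only [hνdef, Set.mem_setOf_eq] at hp
    constructor
    · simp only [Set.mem_Iio]
      by_contra hge
      push_neg at hge
      have h1 := hI i' hge
      have h2 : c * m j' ≤ Cm := (le_abs_self _).trans (hCm j')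
      linarith
    · exact Set.mem_univ _
  -- the support
  set T : Set (ℕ × Fin ℓ × Fin (N + 1)) := {p | a p.1 p.2.1 p.2.2 ≠ 0} with hTdef
  have hmemT : (i, j, β) ∈ T := hne
  have hTF : ({p | ν p ≤ ν (i, j, β)} ∩ T).Finite := (hfin _).inter_of_left T
  have hTFne : (i, j, β) ∈ hTF.toFinset := by
    rw [Set.Finite.mem_toFinset]
    exact ⟨Set.mem_setOf.2 (le_refl _), hmemT⟩
  obtain ⟨p₁, hp₁mem, hp₁min⟩ := hTF.toFinset.exists_min_image ν ⟨_, hTFne⟩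
  rw [Set.Finite.mem_toFinset] at hp₁mem
  have hminT : ∀ q ∈ T, ν p₁ ≤ ν q := by
    intro q hq
    by_cases hq' : ν q ≤ ν (i, j, β)
    · exact hp₁min q (by rw [Set.Finite.mem_toFinset]; exact ⟨Set.mem_setOf.2 hq', hq⟩)
    · push_neg at hq'
      exact le_trans (hp₁min _ hTFne) hq'.le
  set i₀ := p₁.1 with hi₀
  set j₀ := p₁.2.1 with hj₀
  set bs : Finset (Fin (N + 1)) := Finset.univ.filter (fun b => a i₀ j₀ b ≠ 0) with hbs
  have hbsne : bs.Nonempty := ⟨p₁.2.2, Finset.mem_filter.2 ⟨Finset.mem_univ _, hp₁mem.2⟩⟩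
  set β₀ := bs.max' hbsne with hβ₀def
  set p₀ : ℕ × Fin ℓ × Fin (N + 1) := (i₀, j₀, β₀) with hp₀def
  have ha₀ : a i₀ j₀ β₀ ≠ 0 := by
    have hmem : β₀ ∈ bs := bs.max'_mem hbsne
    exact (Finset.mem_filter.1 hmem).2
  have hβmax : ∀ b : Fin (N + 1), a i₀ j₀ b ≠ 0 → b ≤ β₀ :=
    fun b hb => bs.le_max' b (Finset.mem_filter.2 ⟨Finset.mem_univ _, hb⟩)
  have hνp₀ : ν p₀ = ν p₁ := rfl
  have hmin₀ : ∀ q ∈ T, ν p₀ ≤ ν q := by rw [hνp₀]; exact hminT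
  have hlt : ∀ q ∈ T, (q.1, q.2.1) ≠ (i₀, j₀) → ν p₀ < ν q := by
    intro q hq hne'
    rcases lt_or_eq_of_le (hmin₀ q hq) with h | h
    · exact h
    · exfalso
      obtain ⟨h1, h2⟩ := hc q.1 p₀.1 q.2.1 p₀.2.1 (by
        simp only [hνdef] at h
        linarith)
      exact hne' (by rw [h1, h2])
  -- the ray
  set ρ : ℝ := ‖1 + (c : ℂ) * Complex.I‖ with hρdef
  have hρ1 : 1 ≤ ρ := by
    have h := Complex.abs_re_le_norm (1 + (c : ℂ) * Complex.I)
    simpa using h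
  have hρ0 : 0 < ρ := lt_of_lt_of_le one_pos hρ1
  set ws : ℝ → ℂ := fun s => (s : ℂ) * (1 + (c : ℂ) * Complex.I) with hwsdef
  have hre : ∀ s, (ws s).re = s := by
    intro s; simp [hwsdef, Complex.mul_re]
  have him : ∀ s, (ws s).im = s * c := by
    intro s; simp [hwsdef, Complex.mul_im]
  have hAbs : ∀ s, ‖ws s‖ = |s| * ρ := by
    intro s; rw [hwsdef, hρdef]; simp [norm_mul, Complex.norm_real]
  have hntrm : ∀ (s : ℝ) (p : ℕ × Fin ℓ × Fin (N + 1)), ‖trm n m a (ws s) p‖ =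
      ‖a p.1 p.2.1 p.2.2‖ * Real.exp (ν p * s) * (|s| * ρ) ^ (p.2.2 : ℕ) := by
    intro s p
    rw [norm_trm, hAbs, hre, him]
    congr 2
    simp only [hνdef]
    ring_nf
  -- reference point
  set s₁ : ℝ := min σ 0 - 1 with hs₁def
  have hs₁σ : s₁ < σ := by
    have := min_le_left σ 0; simp only [hs₁def]; linarith
  have hs₁neg : s₁ ≤ -1 := by
    have := min_le_right σ 0; simp only [hs₁def]; linarith
  have hs₁abs : |s₁| = -s₁ := abs_of_nonpos (by linarith)
  have hs₁abs1 : 1 ≤ |s₁| := by rw [hs₁abs]; linarith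
  have hGsum : Summable fun p => ‖trm n m a (ws s₁) p‖ :=
    hs (ws s₁) (by rw [hre]; exact hs₁σ)
  set G : ℝ := ∑' p, ‖trm n m a (ws s₁) p‖ with hGdef
  have hGnonneg : 0 ≤ G := tsum_nonneg fun p => norm_nonneg _
  set Q : Finset (ℕ × Fin ℓ × Fin (N + 1)) := (hfin (ν p₀ + 1)).toFinset with hQdef
  have hp₀Q : p₀ ∈ Q := by
    rw [hQdef, Set.Finite.mem_toFinset]
    simp only [Set.mem_setOf_eq]; linarith
  set D : ℝ → ℝ := fun s => Real.exp (ν p₀ * s) * (|s| * ρ) ^ (β₀ : ℕ) with hDdef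
  set tailB : ℝ → ℝ := fun s =>
    G * Real.exp ((ν p₀ + 1) * (s - s₁)) * (|s| / |s₁|) ^ N with htailBdef
  set h : ℝ → ℝ := fun s =>
    ((∑ q ∈ Q, (if q = p₀ then 0 else ‖trm n m a (ws s) q‖)) + tailB s) / D s with hhdef
  -- MAIN BOUND
  have hbound : ∀ s ≤ s₁, ‖a i₀ j₀ β₀‖ ≤ h s := by
    intro s hss₁
    have hsneg : s ≤ -1 := le_trans hss₁ hs₁neg
    have hsabs : |s| = -s := abs_of_nonpos (by linarith)
    have hsabs1 : (1:ℝ) ≤ |s| := by rw [hsabs]; linarith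
    have hx1 : (1:ℝ) ≤ |s| * ρ := le_trans hsabs1 (le_mul_of_one_le_right (by linarith) hρ1)
    have hsσ : (ws s).re < σ := by rw [hre]; linarith
    have hsum_s := hs (ws s) hsσ
    have hzero := h0 (ws s) hsσ
    have hDpos : 0 < D s :=
      mul_pos (Real.exp_pos _) (pow_pos (lt_of_lt_of_le one_pos hx1) _)
    have hgoal : ‖a i₀ j₀ β₀‖ * D s ≤
        (∑ q ∈ Q, (if q = p₀ then 0 else ‖trm n m a (ws s) q‖)) + tailB s := by
      have hterm₀ : ‖a i₀ j₀ β₀‖ * D s = ‖trm n m a (ws s) p₀‖ := by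
        rw [hntrm s p₀, hDdef]
        ring
      rw [hterm₀]
      have hsum_c : Summable (trm n m a (ws s)) := hsum_s.of_norm
      have heq := hsum_c.tsum_eq_add_tsum_ite p₀
      rw [hzero] at heq
      have hneg : trm n m a (ws s) p₀ = - ∑' q, ite (q = p₀) 0 (trm n m a (ws s) q) := by
        linear_combination -heq
      have hgnonneg : ∀ q, 0 ≤ (if q = p₀ then (0:ℝ) else ‖trm n m a (ws s) q‖) :=
        fun q => by by_cases hq : q = p₀ <;> simp [hq]
      have hgle : ∀ q, (if q = p₀ then (0:ℝ) else ‖trm n m a (ws s) q‖) ≤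
          ‖trm n m a (ws s) q‖ := fun q => by by_cases hq : q = p₀ <;> simp [hq]
      have hgsum : Summable (fun q => if q = p₀ then (0:ℝ) else ‖trm n m a (ws s) q‖) :=
        Summable.of_nonneg_of_le hgnonneg hgle hsum_s
      have hite : ∀ q, ‖if q = p₀ then (0:ℂ) else trm n m a (ws s) q‖ =
          (if q = p₀ then (0:ℝ) else ‖trm n m a (ws s) q‖) := fun q => by
        by_cases hq : q = p₀ <;> simp [hq]
      have h1 : ‖trm n m a (ws s) p₀‖ ≤
          ∑' q, (if q = p₀ then (0:ℝ) else ‖trm n m a (ws s) q‖) := by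
        rw [hneg, norm_neg]
        calc ‖∑' q, ite (q = p₀) (0:ℂ) (trm n m a (ws s) q)‖
            ≤ ∑' q, ‖ite (q = p₀) (0:ℂ) (trm n m a (ws s) q)‖ :=
              norm_tsum_le_tsum_norm (hgsum.congr fun q => (hite q).symm)
          _ = ∑' q, (if q = p₀ then (0:ℝ) else ‖trm n m a (ws s) q‖) := tsum_congr hite
      refine le_trans h1 ?_
      rw [← hgsum.sum_add_tsum_compl (s := Q)]
      refine add_le_add le_rfl ?_
      -- tail bound
      have hCnn : (0:ℝ) ≤ Real.exp ((ν p₀ + 1) * (s - s₁)) * (|s| / |s₁|) ^ N := by positivity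
      calc ∑' (q : ↑((Q : Set (ℕ × Fin ℓ × Fin (N + 1)))ᶜ)),
            (if (q : ℕ × Fin ℓ × Fin (N + 1)) = p₀ then (0:ℝ)
              else ‖trm n m a (ws s) (q : ℕ × Fin ℓ × Fin (N + 1))‖)
          ≤ ∑' (q : ↑((Q : Set (ℕ × Fin ℓ × Fin (N + 1)))ᶜ)),
            ‖trm n m a (ws s₁) (q : ℕ × Fin ℓ × Fin (N + 1))‖ *
              (Real.exp ((ν p₀ + 1) * (s - s₁)) * (|s| / |s₁|) ^ N) := by
            apply Summable.tsum_le_tsum _ (hgsum.subtype _) ((hGsum.mul_right _).subtype _)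
            rintro ⟨q, hq⟩
            have hqgt : ν p₀ + 1 < ν q := by
              by_contra hqle
              push_neg at hqle
              exact hq (Finset.mem_coe.2 ((hfin _).mem_toFinset.2 hqle))
            have hqne : ¬ (q = p₀) := by
              rintro rfl
              exact absurd hqgt (by simp)
            simp only [Function.comp_apply, if_neg hqne]
            rw [hntrm, hntrm]
            have e1 : Real.exp (ν q * s) ≤
                Real.exp (ν q * s₁) * Real.exp ((ν p₀ + 1) * (s - s₁)) := by
              rw [← Real.exp_add, Real.exp_le_exp]
              have := mul_le_mul_of_nonpos_right hqgt.le (sub_nonpos.2 hss₁)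
              nlinarith
            have hs₁pos : (0:ℝ) < |s₁| := lt_of_lt_of_le one_pos hs₁abs1
            have e2 : (|s| * ρ) ^ (q.2.2 : ℕ) ≤
                (|s₁| * ρ) ^ (q.2.2 : ℕ) * (|s| / |s₁|) ^ N := by
              have h5 : (|s| * ρ) ^ (q.2.2 : ℕ) =
                  (|s₁| * ρ) ^ (q.2.2 : ℕ) * (|s| / |s₁|) ^ (q.2.2 : ℕ) := by
                rw [mul_pow, mul_pow, div_pow, mul_comm (|s₁| ^ _) (ρ ^ _), mul_assoc, mul_div_assoc',
                  mul_div_right_comm, div_self (pow_ne_zero _ hs₁pos.ne'), one_mul, mul_comm]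
              rw [h5]
              apply mul_le_mul_of_nonneg_left _ (by positivity)
              apply pow_le_pow_right₀ _ q.2.2.is_le
              rw [le_div_iff₀ hs₁pos, one_mul, hsabs, hs₁abs]
              linarith
            calc ‖a q.1 q.2.1 q.2.2‖ * Real.exp (ν q * s) * (|s| * ρ) ^ (q.2.2 : ℕ)
                ≤ ‖a q.1 q.2.1 q.2.2‖ *
                    (Real.exp (ν q * s₁) * Real.exp ((ν p₀ + 1) * (s - s₁))) *
                    ((|s₁| * ρ) ^ (q.2.2 : ℕ) * (|s| / |s₁|) ^ N) := by
                  apply mul_le_mul _ e2 (by positivity) (by positivity)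
                  exact mul_le_mul_of_nonneg_left e1 (norm_nonneg _)
              _ = ‖a q.1 q.2.1 q.2.2‖ * Real.exp (ν q * s₁) * (|s₁| * ρ) ^ (q.2.2 : ℕ) *
                    (Real.exp ((ν p₀ + 1) * (s - s₁)) * (|s| / |s₁|) ^ N) := by ring
        _ = (∑' (q : ↑((Q : Set (ℕ × Fin ℓ × Fin (N + 1)))ᶜ)),
              ‖trm n m a (ws s₁) (q : ℕ × Fin ℓ × Fin (N + 1))‖) *
              (Real.exp ((ν p₀ + 1) * (s - s₁)) * (|s| / |s₁|) ^ N) := tsum_mul_right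
        _ ≤ G * (Real.exp ((ν p₀ + 1) * (s - s₁)) * (|s| / |s₁|) ^ N) := by
            apply mul_le_mul_of_nonneg_right _ hCnn
            exact Summable.tsum_subtype_le _ _ (fun p => norm_nonneg _) hGsum
        _ = tailB s := by simp only [htailBdef]; ring
    rw [hhdef]
    dsimp only
    rw [le_div_iff₀ hDpos]
    exact hgoal
  -- LIMIT
  have hD0 : ∀ s, 0 ≤ D s := fun s => by
    simp only [hDdef]
    positivity
  have hlim : Tendsto h atBot (𝓝 0) := by
    have hh2 : h = fun s =>
        (∑ q ∈ Q, (if q = p₀ then (0:ℝ) else ‖trm n m a (ws s) q‖) / D s)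
          + tailB s / D s := by
      funext s
      rw [hhdef]
      dsimp only
      rw [add_div, Finset.sum_div]
    rw [hh2]
    have hterm : ∀ q ∈ Q, Tendsto (fun s =>
        (if q = p₀ then (0:ℝ) else ‖trm n m a (ws s) q‖) / D s) atBot (𝓝 0) := by
      intro q _
      by_cases hq : q = p₀
      · simp only [if_pos hq, zero_div]
        exact tendsto_const_nhds
      · simp only [if_neg hq]
        by_cases haq : a q.1 q.2.1 q.2.2 = 0
        · have hz : ∀ s : ℝ, (0:ℝ) = ‖trm n m a (ws s) q‖ / D s := fun s => by
            simp [trm, haq]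
          exact tendsto_const_nhds.congr hz
        · have hqT : q ∈ T := haq
          by_cases hij : (q.1, q.2.1) = (i₀, j₀)
          · have h1 : q.1 = i₀ := (Prod.mk_inj.mp hij).1
            have h2 : q.2.1 = j₀ := (Prod.mk_inj.mp hij).2
            have hνq : ν q = ν p₀ := by
              simp only [hνdef, hp₀def, h1, h2]
            have hble : (q.2.2 : ℕ) ≤ (β₀ : ℕ) := by
              have haq' : a i₀ j₀ q.2.2 ≠ 0 := by rw [← h1, ← h2]; exact haq
              exact hβmax _ haq'
            have hbne : (q.2.2 : ℕ) ≠ (β₀ : ℕ) := by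
              intro hh
              apply hq
              rw [hp₀def]
              exact Prod.ext h1 (Prod.ext h2 (Fin.ext hh))
            have hk : 0 < (β₀ : ℕ) - (q.2.2 : ℕ) := by omega
            apply squeeze_zero' (g := fun s => ‖a q.1 q.2.1 q.2.2‖ /
                (-s * ρ) ^ ((β₀ : ℕ) - (q.2.2 : ℕ)))
            · exact Eventually.of_forall fun s => div_nonneg (norm_nonneg _) (hD0 s)
            · filter_upwards [eventually_le_atBot (-1:ℝ)] with s hs'
              have hsabs : |s| = -s := abs_of_nonpos (by linarith)
              have hs1 : (1:ℝ) ≤ |s| := by rw [hsabs]; linarith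
              have hx1 : (1:ℝ) ≤ |s| * ρ :=
                le_trans hs1 (le_mul_of_one_le_right (abs_nonneg _) hρ1)
              rw [hntrm, hνq]
              simp only [hDdef]
              rw [← hsabs]
              exact sub1 (Real.exp_pos _) hx1 hble (norm_nonneg _)
            · exact helperPow _ hk hρ0
          · have hγ : 0 < ν q - ν p₀ := sub_pos.2 (hlt q hqT hij)
            apply squeeze_zero' (g := fun s => ‖a q.1 q.2.1 q.2.2‖ *
                Real.exp ((ν q - ν p₀) * s) * (-s * ρ) ^ N)
            · exact Eventually.of_forall fun s => div_nonneg (norm_nonneg _) (hD0 s)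
            · filter_upwards [eventually_le_atBot (-1:ℝ)] with s hs'
              have hsabs : |s| = -s := abs_of_nonpos (by linarith)
              have hs1 : (1:ℝ) ≤ |s| := by rw [hsabs]; linarith
              have hx1 : (1:ℝ) ≤ |s| * ρ :=
                le_trans hs1 (le_mul_of_one_le_right (abs_nonneg _) hρ1)
              rw [hntrm]
              simp only [hDdef]
              rw [← hsabs]
              exact sub2 (ν q) (ν p₀) s (norm_nonneg _) hx1 q.2.2.is_le
            · exact helperExp _ hγ N ρ
    have hA : Tendsto (fun s => ∑ q ∈ Q,
        (if q = p₀ then (0:ℝ) else ‖trm n m a (ws s) q‖) / D s) atBot (𝓝 0) := by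
      have := tendsto_finset_sum Q hterm
      simpa using this
    have hB : Tendsto (fun s => tailB s / D s) atBot (𝓝 0) := by
      set C₂ : ℝ := G * Real.exp (-(ν p₀ + 1) * s₁) / |s₁| ^ N with hC₂def
      apply squeeze_zero' (g := fun s => C₂ * Real.exp (1 * s) * (-s * 1) ^ N)
      · apply Eventually.of_forall
        intro s
        apply div_nonneg _ (hD0 s)
        simp only [htailBdef]
        exact mul_nonneg (mul_nonneg hGnonneg (Real.exp_pos _).le) (by positivity)
      · filter_upwards [eventually_le_atBot (-1:ℝ)] with s hs'
        have hsabs : |s| = -s := abs_of_nonpos (by linarith)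
        have hs1 : (1:ℝ) ≤ |s| := by rw [hsabs]; linarith
        have hx1 : (1:ℝ) ≤ |s| * ρ :=
          le_trans hs1 (le_mul_of_one_le_right (abs_nonneg _) hρ1)
        have hxpow : (1:ℝ) ≤ (|s| * ρ) ^ (β₀ : ℕ) := one_le_pow₀ hx1
        have htB0 : 0 ≤ tailB s := by
          simp only [htailBdef]
          exact mul_nonneg (mul_nonneg hGnonneg (Real.exp_pos _).le) (by positivity)
        have step1 : tailB s / D s ≤ tailB s / Real.exp (ν p₀ * s) := by
          apply div_le_div_of_nonneg_left htB0 (Real.exp_pos _)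
          simp only [hDdef]
          exact le_mul_of_one_le_right (Real.exp_pos _).le hxpow
        have hs₁pos : (0:ℝ) < -s₁ := by linarith
        have step2 : tailB s / Real.exp (ν p₀ * s) =
            C₂ * Real.exp (1 * s) * (-s * 1) ^ N := by
          simp only [htailBdef, hC₂def]
          rw [hsabs, hs₁abs]
          have e1 : Real.exp ((ν p₀ + 1) * (s - s₁)) =
              Real.exp (1 * s) * Real.exp (-(ν p₀ + 1) * s₁) * Real.exp (ν p₀ * s) := by
            rw [← Real.exp_add, ← Real.exp_add]
            congr 1
            ring
          rw [e1, div_pow]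
          have hne2 : (-s₁) ^ N ≠ 0 := pow_ne_zero _ hs₁pos.ne'
          field_simp
        rw [step2] at step1
        exact step1
      · exact helperExp C₂ one_pos N 1
    simpa using hA.add hB
  have hfinal : ‖a i₀ j₀ β₀‖ ≤ 0 :=
    ge_of_tendsto hlim (Filter.eventually_atBot.2 ⟨s₁, hbound⟩)
  exact ha₀ (norm_le_zero_iff.1 hfinal)

end Stmt1Aux

/-- Unique expansion property for sets of the form
`{n_i + m_j·I : i ∈ ℤ_{>0}, j = 1,…,ℓ} × {0,…,N}`: if the series
`∑ a_{i,j,β} e^{(n_i + m_j I)·L(z)} (L(z))^β` converges absolutely to `0`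
for all `z` in some nonempty open subset of `ℂ \ {0}` (with `L` a fixed branch of
the logarithm), then all coefficients vanish. -/
theorem stmt1 (n : ℕ → ℝ) (hn : StrictMono n) (hn' : Filter.Tendsto n Filter.atTop Filter.atTop)
    (ℓ : ℕ) (m : Fin ℓ → ℝ) (hm : Function.Injective m) (N : ℕ)
    (a : ℕ → Fin ℓ → Fin (N + 1) → ℂ)
    (L : ℂ → ℂ) (U : Set ℂ) (hU : IsOpen U) (hUne : U.Nonempty) (hU0 : (0 : ℂ) ∉ U)
    (hL : ∀ z ∈ U, Complex.exp (L z) = z) (hLc : ContinuousOn L U)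
    (habs : ∀ z ∈ U, Summable (fun p : ℕ × Fin ℓ × Fin (N + 1) =>
      ‖a p.1 p.2.1 p.2.2 * Complex.exp ((↑(n p.1) + ↑(m p.2.1) * Complex.I) * L z) *
        (L z) ^ (p.2.2 : ℕ)‖))
    (hsum : ∀ z ∈ U, (∑' p : ℕ × Fin ℓ × Fin (N + 1),
      a p.1 p.2.1 p.2.2 * Complex.exp ((↑(n p.1) + ↑(m p.2.1) * Complex.I) * L z) *
        (L z) ^ (p.2.2 : ℕ)) = 0) :
    ∀ i j β, a i j β = 0 := by

  intro i j β
  rcases Nat.eq_zero_or_pos ℓ with hℓ | hℓ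
  · exact absurd j.pos (by omega)
  obtain ⟨z₀, hz₀⟩ := hUne
  obtain ⟨r, hr, hball⟩ := Metric.isOpen_iff.1 hU z₀ hz₀
  have hz₀0 : z₀ ≠ 0 := fun h => hU0 (h ▸ hz₀)
  set u : ℂ := (↑(‖z₀‖))⁻¹ * z₀ with hu
  have habs0 : ‖z₀‖ ≠ 0 := norm_ne_zero_iff.mpr hz₀0
  have hu1 : ‖u‖ = 1 := by
    rw [hu, norm_mul, norm_inv, Complex.norm_real, Real.norm_eq_abs, _root_.abs_of_nonneg (norm_nonneg _)]
    exact inv_mul_cancel₀ habs0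
  have hz₀u : (↑(‖z₀‖) : ℂ) * u = z₀ := by
    rw [hu]
    exact mul_inv_cancel_left₀ (by exact_mod_cast habs0) z₀
  have hzt : ∀ t : ℝ, 0 ≤ t → ‖z₀ + ↑t * u‖ = ‖z₀‖ + t := by
    intro t ht
    have h1 : z₀ + ↑t * u = ((‖z₀‖ + t : ℝ) : ℂ) * u := by
      push_cast
      rw [add_mul, hz₀u]
    rw [h1, norm_mul, hu1, mul_one, Complex.norm_real, Real.norm_eq_abs]
    exact _root_.abs_of_nonneg (add_nonneg (norm_nonneg _) ht)
  have hmem : ∀ t : ℝ, 0 ≤ t → t < r → z₀ + ↑t * u ∈ U := by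
    intro t ht htr
    apply hball
    rw [Metric.mem_ball, Complex.dist_eq]
    have h2 : z₀ + ↑t * u - z₀ = ↑t * u := by ring
    rw [h2, norm_mul, hu1, mul_one, Complex.norm_real, Real.norm_eq_abs, _root_.abs_of_nonneg ht]
    exact htr
  have hu0 : u ≠ 0 := by
    intro hu0
    rw [hu0] at hu1
    simp at hu1
  obtain ⟨t, ht0, htr, htbig, htne⟩ :
      ∃ t : ℝ, 0 ≤ t ∧ t < r ∧ 0 < t ∧ z₀ + ↑t * u ≠ 1 := by
    by_cases h1 : z₀ + ↑(r/2) * u = 1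
    · refine ⟨3*r/4, by linarith, by linarith, by linarith, ?_⟩
      intro h2
      rw [← h1] at h2
      have h3 := add_left_cancel h2
      have h4 := mul_right_cancel₀ hu0 h3
      have h5 : (3*r/4 : ℝ) = r/2 := by exact_mod_cast h4
      linarith
    · exact ⟨r/2, by linarith, by linarith, by linarith, h1⟩
  set z₁ : ℂ := z₀ + ↑t * u with hz₁def
  have hz₁U : z₁ ∈ U := hmem t ht0 htr
  have hz₁abs : ‖z₁‖ = ‖z₀‖ + t := hzt t ht0
  set w₁ : ℂ := L z₁ with hw₁def
  have hexpw₁ : Complex.exp w₁ = z₁ := hL z₁ hz₁U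
  have hw₁0 : w₁ ≠ 0 := by
    intro h
    rw [h, Complex.exp_zero] at hexpw₁
    exact htne hexpw₁.symm
  have habsw₁ : 0 < ‖w₁‖ := norm_pos_iff.mpr hw₁0
  set σ : ℝ := w₁.re with hσdef
  have hσabs : Real.exp σ = ‖z₁‖ := by
    rw [hσdef, ← Complex.norm_exp, hexpw₁]
  have hS₁ : Summable fun p : ℕ × Fin ℓ × Fin (N+1) => ‖Stmt1Aux.trm n m a w₁ p‖ :=
    habs z₁ hz₁U
  have : Nonempty (Fin ℓ) := ⟨⟨0, hℓ⟩⟩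
  obtain ⟨Mm, hMm⟩ : ∃ Mm : ℝ, ∀ j' : Fin ℓ, |m j'| ≤ Mm :=
    ⟨Finset.univ.sup' Finset.univ_nonempty fun j' => |m j'|,
      fun j' => Finset.le_sup' (fun j'' => |m j''|) (Finset.mem_univ j')⟩
  have hMm0 : 0 ≤ Mm := le_trans (abs_nonneg _) (hMm ⟨0, hℓ⟩)
  have hmono : Monotone n := hn.monotone
  have hs : ∀ w : ℂ, w.re < σ →
      Summable fun p : ℕ × Fin ℓ × Fin (N+1) => ‖Stmt1Aux.trm n m a w p‖ := by
    intro w hw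
    exact Summable.of_nonneg_of_le (fun p => norm_nonneg _)
      (fun p => Stmt1Aux.trm_norm_le hmono hMm a hw₁0 hw.le p) (hS₁.mul_right _)
  set F : ℂ → ℂ := fun w => ∑' p : ℕ × Fin ℓ × Fin (N+1), Stmt1Aux.trm n m a w p with hF
  have hFdiff : ∀ w₀ ∈ {w : ℂ | w.re < σ}, DifferentiableAt ℂ F w₀ := by
    intro w₀ hw₀
    simp only [Set.mem_setOf_eq] at hw₀
    set r' : ℝ := (σ - w₀.re)/2 with hr'
    have hr'0 : 0 < r' := by rw [hr']; linarith
    set R : ℝ := ‖w₀‖ + r' with hR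
    set CB : ℝ := Real.exp (|n 0| * (R + |σ|) + Mm * (R + |w₁.im|)) *
        max 1 (R / ‖w₁‖) ^ N with hCB
    have hdiff : DifferentiableOn ℂ F (Metric.ball w₀ r') := by
      refine differentiableOn_tsum_of_summable_norm (hS₁.mul_right CB)
        (fun p => ?_) Metric.isOpen_ball (fun p w hwball => ?_)
      · apply Differentiable.differentiableOn
        apply Differentiable.mul
        · exact (differentiable_const _).mul
            (Complex.differentiable_exp.comp (differentiable_id.const_mul _))
        · exact differentiable_pow _
      · have hdist : dist w w₀ < r' := Metric.mem_ball.1 hwball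
        have hnormw : ‖w‖ ≤ R := by
          rw [hR]
          calc ‖w‖ = ‖w₀ + (w - w₀)‖ := by ring_nf
            _ ≤ ‖w₀‖ + ‖w - w₀‖ := norm_add_le _ _
            _ ≤ ‖w₀‖ + r' := by
                have : ‖w - w₀‖ = dist w w₀ := (dist_eq_norm _ _).symm
                linarith [this, hdist]
        have hwre : w.re ≤ w₁.re := by
          have h1 : |w.re - w₀.re| ≤ ‖w - w₀‖ := by
            rw [← Complex.sub_re]
            exact Complex.abs_re_le_norm _
          have h2 : ‖w - w₀‖ < r' := by rw [← dist_eq_norm]; exact hdist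
          have h3 := abs_le.1 (le_of_lt (lt_of_le_of_lt h1 h2))
          have : w.re < σ := by rw [hr'] at h3; simp only [hσdef] at *; linarith [h3.2]
          exact this.le
        calc ‖Stmt1Aux.trm n m a w p‖
            ≤ ‖Stmt1Aux.trm n m a w₁ p‖ *
              (Real.exp (n 0 * (w.re - w₁.re) + Mm * (|w.im| + |w₁.im|)) *
                max 1 (‖w‖ / ‖w₁‖) ^ N) :=
              Stmt1Aux.trm_norm_le hmono hMm a hw₁0 hwre p
          _ ≤ ‖Stmt1Aux.trm n m a w₁ p‖ * CB := by
              apply mul_le_mul_of_nonneg_left _ (norm_nonneg _)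
              rw [hCB]
              have habsw : ‖w‖ ≤ R := hnormw
              have hwreabs : |w.re| ≤ R := le_trans (Complex.abs_re_le_norm w) habsw
              have hwimabs : |w.im| ≤ R := le_trans (Complex.abs_im_le_norm w) habsw
              apply mul_le_mul _ _ (by positivity) (Real.exp_pos _).le
              · rw [Real.exp_le_exp]
                have e1 : n 0 * (w.re - w₁.re) ≤ |n 0| * (R + |σ|) := by
                  calc n 0 * (w.re - w₁.re) ≤ |n 0 * (w.re - w₁.re)| := le_abs_self _
                    _ = |n 0| * |w.re - w₁.re| := abs_mul _ _
                    _ ≤ |n 0| * (R + |σ|) := by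
                        apply mul_le_mul_of_nonneg_left _ (abs_nonneg _)
                        have h4 := abs_le.1 hwreabs
                        have h5 := le_abs_self σ
                        have h6 := neg_abs_le σ
                        apply abs_le.2
                        constructor <;> simp only [hσdef] at * <;> linarith
                have e2 : Mm * (|w.im| + |w₁.im|) ≤ Mm * (R + |w₁.im|) :=
                  mul_le_mul_of_nonneg_left (by linarith) hMm0
                linarith
              · apply pow_le_pow_left₀ (le_trans zero_le_one (le_max_left _ _))
                apply max_le_max le_rfl
                gcongr
    exact hdiff.differentiableAt (Metric.isOpen_ball.mem_nhds (Metric.mem_ball_self hr'0))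
  have hFanalytic : AnalyticOnNhd ℂ F {w : ℂ | w.re < σ} := by
    apply DifferentiableOn.analyticOnNhd (s := {w : ℂ | w.re < σ})
    · exact fun w hw => (hFdiff w hw).differentiableWithinAt
    · exact isOpen_lt Complex.continuous_re continuous_const
  have hFzero : ∀ z ∈ U, F (L z) = 0 := hsum
  set zk : ℕ → ℂ := fun k => z₀ + ↑(r / ((k:ℝ) + 2)) * u with hzk
  have hzkpos : ∀ k : ℕ, 0 < r / ((k:ℝ) + 2) := fun k => by positivity
  have hzklt : ∀ k : ℕ, r / ((k:ℝ) + 2) < r := by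
    intro k
    rw [div_lt_iff₀ (by positivity)]
    nlinarith [Nat.cast_nonneg (α := ℝ) k]
  have hzkU : ∀ k, zk k ∈ U := fun k => hmem _ (hzkpos k).le (hzklt k)
  have hzkne : ∀ k, zk k ≠ z₀ := by
    intro k h
    have h1 : (↑(r / ((k:ℝ)+2)) : ℂ) * u = 0 := by
      rw [hzk] at h
      linear_combination h
    rcases mul_eq_zero.1 h1 with h' | h'
    · have h2 : r / ((k:ℝ)+2) = 0 := by exact_mod_cast h'
      exact (hzkpos k).ne' h2
    · exact hu0 h'
  have hzktendsto : Tendsto zk atTop (𝓝 z₀) := by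
    have h1 : Tendsto (fun k : ℕ => r / ((k:ℝ) + 2)) atTop (𝓝 0) := by
      apply Tendsto.div_atTop tendsto_const_nhds
      exact tendsto_atTop_add_const_right _ 2 tendsto_natCast_atTop_atTop
    have h2 : Tendsto (fun k : ℕ => ((r / ((k:ℝ)+2) : ℝ) : ℂ)) atTop (𝓝 ((0:ℝ):ℂ)) :=
      (Complex.continuous_ofReal.tendsto _).comp h1
    have h3 : Tendsto (fun k : ℕ => z₀ + ((r / ((k:ℝ)+2) : ℝ) : ℂ) * u) atTop
        (𝓝 (z₀ + ((0:ℝ):ℂ) * u)) := tendsto_const_nhds.add (h2.mul tendsto_const_nhds)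
    have h4 : Tendsto zk atTop (𝓝 (z₀ + ((0:ℝ):ℂ) * u)) :=
      h3.congr (fun k => by rw [hzk])
    simpa using h4
  have hLz₀tendsto : Tendsto (fun k => L (zk k)) atTop (𝓝 (L z₀)) := by
    apply (hLc z₀ hz₀).tendsto.comp
    rw [tendsto_nhdsWithin_iff]
    exact ⟨hzktendsto, Eventually.of_forall hzkU⟩
  have hLne : ∀ k, L (zk k) ≠ L z₀ := by
    intro k h
    apply hzkne k
    rw [← hL _ (hzkU k), ← hL _ hz₀, h]
  have hfreq : ∃ᶠ w in 𝓝[≠] (L z₀), F w = 0 := by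
    have h1 : Tendsto (fun k => L (zk k)) atTop (𝓝[≠] (L z₀)) := by
      rw [tendsto_nhdsWithin_iff]
      exact ⟨hLz₀tendsto, Eventually.of_forall fun k => hLne k⟩
    exact h1.frequently ((Eventually.of_forall (fun k => hFzero _ (hzkU k))).frequently)
  have hLz₀H : (L z₀) ∈ {w : ℂ | w.re < σ} := by
    simp only [Set.mem_setOf_eq]
    rw [← Real.exp_lt_exp]
    have h1 : Real.exp ((L z₀).re) = ‖z₀‖ := by
      rw [← Complex.norm_exp, hL z₀ hz₀]
    rw [h1, hσabs, hz₁abs]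
    linarith
  have hEq : Set.EqOn F 0 {w : ℂ | w.re < σ} :=
    hFanalytic.eqOn_zero_of_preconnected_of_frequently_eq_zero
      (convex_halfSpace_re_lt σ).isPreconnected hLz₀H hfreq
  have h0 : ∀ w : ℂ, w.re < σ →
      ∑' p : ℕ × Fin ℓ × Fin (N+1), Stmt1Aux.trm n m a w p = 0 :=
    fun w hw => hEq hw
  exact Stmt1Aux.coeffs_eq_zero hn hn' hm a hs h0 i j β
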